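/- Let R be a principal ideal domain, M a finite free R-module, e : M × M → R a symmetric perfect pairing, and N a submodule of M with M/N torsion-free such that N^⊥ ⊆ N. Then ẽ(a + N^⊥, b + N^⊥) = e(a,b) defines a symmetric perfect pairing on N/N^⊥. -/

import Mathlib

/-- Proposition: over a PID, a symmetric perfect pairing `e` on a finite free module `M`,
together with a submodule `N` with `M/N` torsion-free and `N^⊥ ⊆ N`, induces a well-defined
symmetric perfect pairing `ẽ` on `N / N^⊥` with `ẽ(a + N^⊥, b + N^⊥) = e(a, b)`. -/
theorem induced_symmetric_perfect_pairing {R M : Type*} [CommRing R] [IsDomain R]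
    [IsPrincipalIdealRing R] [AddCommGroup M] [Module R M]
    [Module.Free R M] [Module.Finite R M]
    (e : M →ₗ[R] M →ₗ[R] R)
    (hsymm : ∀ x y : M, e x y = e y x)
    (hperf : Function.Bijective e)
    (N : Submodule R M) (hN : NoZeroSMulDivisors R (M ⧸ N))
    (hsub : (⨅ n ∈ N, LinearMap.ker (e n)) ≤ N) :
    ∃ f : (N ⧸ Submodule.comap N.subtype (⨅ n ∈ N, LinearMap.ker (e n))) →ₗ[R]
          (N ⧸ Submodule.comap N.subtype (⨅ n ∈ N, LinearMap.ker (e n))) →ₗ[R] R,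
      (∀ a b : N, f (Submodule.Quotient.mk a) (Submodule.Quotient.mk b) = e (a : M) (b : M)) ∧
      (∀ x y, f x y = f y x) ∧ Function.Bijective f := by
  classical
  set P : Submodule R M := ⨅ n ∈ N, LinearMap.ker (e n) with hPdef
  have hmemP : ∀ x : M, x ∈ P ↔ ∀ n ∈ N, e n x = 0 := by
    intro x
    simp [hPdef, Submodule.mem_iInf, LinearMap.mem_ker]
  set P' : Submodule R N := Submodule.comap N.subtype P with hP'def
  have hmemP' : ∀ x : N, x ∈ P' ↔ ∀ n ∈ N, e n (x : M) = 0 := fun x => hmemP x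
  -- restricted pairing on N
  set g : N →ₗ[R] N →ₗ[R] R := e.compl₁₂ N.subtype N.subtype with hgdef
  have hg : ∀ a b : N, g a b = e (a : M) (b : M) := fun a b => rfl
  have h1 : P' ≤ LinearMap.ker g.flip := by
    intro p hp
    rw [LinearMap.mem_ker]
    ext b
    have := (hmemP' p).mp hp b b.2
    simpa [hg, hsymm (b : M) (p : M)] using this
  set k : (N ⧸ P') →ₗ[R] N →ₗ[R] R := P'.liftQ g.flip h1 with hkdef
  have hk : ∀ b a : N, k (Submodule.Quotient.mk b) a = e (a : M) (b : M) := fun b a => rfl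
  have h2 : P' ≤ LinearMap.ker k.flip := by
    intro p hp
    rw [LinearMap.mem_ker]
    ext x
    have := (hmemP' p).mp hp x x.2
    simpa [hk, hsymm (p : M) (x : M)] using this
  refine ⟨P'.liftQ k.flip h2, fun a b => rfl, ?_, ?_, ?_⟩
  · intro x y
    obtain ⟨a, rfl⟩ := Submodule.Quotient.mk_surjective P' x
    obtain ⟨b, rfl⟩ := Submodule.Quotient.mk_surjective P' y
    exact hsymm (a : M) (b : M)
  · -- injectivity
    rw [← LinearMap.ker_eq_bot]
    rw [eq_bot_iff]
    intro x hx
    obtain ⟨a, rfl⟩ := Submodule.Quotient.mk_surjective P' x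
    rw [LinearMap.mem_ker] at hx
    have ha : a ∈ P' := by
      rw [hmemP']
      intro n hn
      have : e (a : M) n = 0 := by
        have := congrArg (fun F => F (Submodule.Quotient.mk (⟨n, hn⟩ : N))) hx
        simpa [hk] using this
      rw [hsymm n (a : M)]; exact this
    simpa [Submodule.Quotient.mk_eq_zero] using ha
  · -- surjectivity
    intro φ
    -- M ⧸ N is finite free
    have hfree : Module.Free R (M ⧸ N) := Module.free_of_finite_type_torsion_free'
    -- splitting of mkQ
    obtain ⟨s, hs⟩ := Module.projective_lifting_property N.mkQ (LinearMap.id)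
      (Submodule.mkQ_surjective N)
    have hsval : ∀ z : M ⧸ N, N.mkQ (s z) = z := fun z => congrArg (fun F => F z) hs
    -- projection onto N
    have hmem : ∀ x : M, x - s (N.mkQ x) ∈ N := by
      intro x
      rw [← Submodule.Quotient.mk_eq_zero]
      have : N.mkQ (x - s (N.mkQ x)) = 0 := by
        rw [map_sub, hsval]; simp
      simpa using this
    set π : M →ₗ[R] N := LinearMap.codRestrict N (LinearMap.id - s ∘ₗ N.mkQ) hmem with hπdef
    have hπ : ∀ n : N, π (n : M) = n := by
      intro n
      apply Subtype.ext
      have h0 : (Submodule.Quotient.mk ((n : M)) : M ⧸ N) = 0 :=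
        (Submodule.Quotient.mk_eq_zero _).mpr n.2
      simp [hπdef, LinearMap.codRestrict, h0]
    set ψ : M →ₗ[R] R := (φ ∘ₗ P'.mkQ) ∘ₗ π with hψdef
    obtain ⟨x, hx⟩ := hperf.2 ψ
    have hxn : ∀ n : N, e x (n : M) = φ (Submodule.Quotient.mk n) := by
      intro n
      have : e x (n : M) = ψ (n : M) := by rw [hx]
      rw [this, hψdef]
      simp [hπ n]
    have hxP : ∀ p : M, p ∈ P → e x p = 0 := by
      intro p hp
      have hpN : p ∈ N := hsub hp
      have : (⟨p, hpN⟩ : N) ∈ P' := hp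
      have h0 : (Submodule.Quotient.mk (⟨p, hpN⟩ : N) : N ⧸ P') = 0 :=
        (Submodule.Quotient.mk_eq_zero _).mpr this
      have := hxn ⟨p, hpN⟩
      rw [h0] at this
      simpa using this
    have hxN : x ∈ N := by
      by_contra hxn'
      have hne : N.mkQ x ≠ 0 := by
        simpa [Submodule.Quotient.mk_eq_zero] using hxn'
      haveI := hfree
      let b := Module.Free.chooseBasis R (M ⧸ N)
      have : ¬ ∀ i, b.coord i (N.mkQ x) = 0 := by
        intro h
        exact hne (b.forall_coord_eq_zero_iff.mp h)
      push_neg at this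
      obtain ⟨i, hi⟩ := this
      set χ : M →ₗ[R] R := (b.coord i) ∘ₗ N.mkQ with hχdef
      obtain ⟨y, hy⟩ := hperf.2 χ
      have hyP : y ∈ P := by
        rw [hmemP]
        intro n hn
        have : e y n = 0 := by
          rw [hy, hχdef]
          have : N.mkQ n = 0 := (Submodule.Quotient.mk_eq_zero _).mpr hn
          simp [this]
        rw [hsymm n y]; exact this
      have h0 : e x y = 0 := hxP y hyP
      have hne0 : e x y ≠ 0 := by
        rw [hsymm x y, hy, hχdef]
        simpa using hi
      exact hne0 h0
    refine ⟨Submodule.Quotient.mk (⟨x, hxN⟩ : N), ?_⟩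
    apply Submodule.linearMap_qext
    ext n
    simpa [hk] using hxn n
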